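/- Let E(x) = max(1 − exp(−x), 0). Then for every integer n ≥ 1 and every x ∈ ℝ, max(n·E(x + log n) − (n−1), 0) = E(x); that is, the exponential distribution function E is freely max-stable with normalizing constants aₙ = 1 and bₙ = log n. -/

import Mathlib

open Filter Topology

noncomputable def freePow (F : ℝ → ℝ) (n : ℕ) (x : ℝ) : ℝ :=
  max ((n : ℝ) * F x - ((n : ℝ) - 1)) 0

/-- Type I free extreme value law: the exponential distribution function. -/
noncomputable def expDF (x : ℝ) : ℝ := max (1 - Real.exp (-x)) 0

/-- The exponential distribution function is freely max-stable with
normalizing constants `aₙ = 1`, `bₙ = log n`. -/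
theorem expDF_freelyMaxStable :
    ∀ n : ℕ, 1 ≤ n → ∀ x : ℝ,
      freePow expDF n (1 * x + Real.log n) = expDF x := by
  intro n hn x
  have hn' : (0 : ℝ) < n := by exact_mod_cast hn
  have hn1 : (1:ℝ) ≤ n := by exact_mod_cast hn
  have hexp : Real.exp (-(1 * x + Real.log n)) = Real.exp (-x) / n := by
    rw [neg_add, Real.exp_add, Real.exp_neg (Real.log n), Real.exp_log hn', one_mul,
      div_eq_mul_inv]
  unfold freePow expDF
  rw [hexp]
  rcases le_or_gt (Real.exp (-x) / n) 1 with h | h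
  · have h1 : (0:ℝ) ≤ 1 - Real.exp (-x) / n := by linarith
    rw [max_eq_left h1]
    have : (n : ℝ) * (1 - Real.exp (-x) / n) - ((n : ℝ) - 1) = 1 - Real.exp (-x) := by
      field_simp
      ring
    rw [this]
  · have h1 : 1 - Real.exp (-x) / n < 0 := by linarith
    rw [max_eq_right h1.le]
    have hge : (1:ℝ) ≤ Real.exp (-x) := by
      have h2 := (one_lt_div hn').mp h
      linarith
    have : 1 - Real.exp (-x) ≤ 0 := by linarith
    rw [max_eq_right this, mul_zero, zero_sub, max_eq_right (by linarith : -((n:ℝ)-1) ≤ 0)]
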